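/- arXiv:2306.07975 — 6 statements merged into one kernel-verified Lean document; each statement's English description precedes it below -/
import Mathlib

section
/- For finite alphabets, conditional PMFs p_{X|Y}, q_{X|Y} with strictly positive entries, a PMF p_Y, and any order α > 1, the n1-conditional Rényi divergence is bounded above by the Bleuler–Lapidoth–Pfister conditional Rényi divergence: D^{n1}_α(p_{X|Y}||q_{X|Y}|p_Y) ≤ D^{BLP}_α(p_{X|Y}||q_{X|Y}|p_Y). -/
open Finset

lemma minkowski_finsum {X Y : Type} [Fintype X] (s : Finset Y)
    (f : X → Y → ℝ) (hf : ∀ x y, 0 ≤ f x y) {α : ℝ} (hα : 1 ≤ α) :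
    (∑ x, (∑ y ∈ s, f x y) ^ α) ^ (1 / α) ≤ ∑ y ∈ s, (∑ x, (f x y) ^ α) ^ (1 / α) := by
  induction s using Finset.cons_induction with
  | empty =>
      simp [one_div, Real.zero_rpow (show α ≠ 0 by positivity), Real.zero_rpow (inv_ne_zero (show α ≠ 0 by positivity))]
  | cons a s ha ih =>
      rw [Finset.sum_cons]
      simp only [Finset.sum_cons]
      have key := Real.Lp_add_le Finset.univ (fun x => f x a) (fun x => ∑ y ∈ s, f x y) hα
      have h1 : ∀ x, |f x a| = f x a := fun x => abs_of_nonneg (hf x a)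
      have h2 : ∀ x, |∑ y ∈ s, f x y| = ∑ y ∈ s, f x y := fun x =>
        abs_of_nonneg (Finset.sum_nonneg fun y _ => hf x y)
      have h3 : ∀ x, |f x a + ∑ y ∈ s, f x y| = f x a + ∑ y ∈ s, f x y := fun x =>
        abs_of_nonneg (add_nonneg (hf x a) (Finset.sum_nonneg fun y _ => hf x y))
      simp only [h1, h2, h3] at key
      exact key.trans (add_le_add le_rfl ih)

/-- For order `α > 1`, the n1-conditional Rényi divergence is bounded
above by the Bleuler–Lapidoth–Pfister conditional Rényi divergence:
`D^{n1}_α(p_{X|Y}‖q_{X|Y}|p_Y) ≤ D^{BLP}_α(p_{X|Y}‖q_{X|Y}|p_Y)`. -/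
theorem n1_le_BLP
    {X Y : Type} [Fintype X] [Fintype Y] [Nonempty X] [Nonempty Y]
    (α : ℝ) (hα : 1 < α)
    (cp cq : X → Y → ℝ) (pY : Y → ℝ)
    (hcp_pos : ∀ x y, 0 < cp x y) (hcp_sum : ∀ y, ∑ x, cp x y = 1)
    (hcq_pos : ∀ x y, 0 < cq x y) (hcq_sum : ∀ y, ∑ x, cq x y = 1)
    (hpY_pos : ∀ y, 0 < pY y) (hpY_sum : ∑ y, pY y = 1) :
    (1 / (α - 1)) *
        Real.log (∑ x, (∑ y, pY y * cp x y * (cq x y) ^ ((1 - α) / α)) ^ α)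
      ≤ (α / (α - 1)) *
        Real.log (∑ y, pY y * (∑ x, (cp x y) ^ α * (cq x y) ^ (1 - α)) ^ (1 / α)) := by
  have hα0 : (0:ℝ) < α := lt_trans one_pos hα
  have hαne : α ≠ 0 := ne_of_gt hα0
  set f : X → Y → ℝ := fun x y => pY y * cp x y * (cq x y) ^ ((1 - α) / α) with hf
  have hfpos : ∀ x y, 0 < f x y := fun x y =>
    mul_pos (mul_pos (hpY_pos y) (hcp_pos x y))
      (Real.rpow_pos_of_pos (hcq_pos x y) ((1 - α) / α))
  set S : ℝ := ∑ x, (∑ y, f x y) ^ α with hS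
  set T : ℝ := ∑ y, pY y * (∑ x, (cp x y) ^ α * (cq x y) ^ (1 - α)) ^ (1 / α) with hT
  have hSpos : 0 < S := Finset.sum_pos (fun x _ => Real.rpow_pos_of_pos
    (Finset.sum_pos (fun y _ => hfpos x y) univ_nonempty) α) univ_nonempty
  have hTpos : 0 < T := by
    refine Finset.sum_pos (fun y _ => ?_) univ_nonempty
    have : (0:ℝ) < ∑ x, (cp x y) ^ α * (cq x y) ^ (1 - α) :=
      Finset.sum_pos (fun x _ => mul_pos (Real.rpow_pos_of_pos (hcp_pos x y) α)
        (Real.rpow_pos_of_pos (hcq_pos x y) (1 - α))) univ_nonempty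
    exact mul_pos (hpY_pos y) (Real.rpow_pos_of_pos this (1/α))
  -- Minkowski step
  have hmink : S ^ (1/α) ≤ ∑ y, (∑ x, (f x y) ^ α) ^ (1/α) :=
    minkowski_finsum Finset.univ f (fun x y => (hfpos x y).le) hα.le
  -- identify the right-hand side of Minkowski with T
  have hid : ∀ y, (∑ x, (f x y) ^ α) ^ (1/α)
      = pY y * (∑ x, (cp x y) ^ α * (cq x y) ^ (1 - α)) ^ (1/α) := by
    intro y
    have hfe : ∀ x, (f x y) ^ α = pY y ^ α * ((cp x y) ^ α * (cq x y) ^ (1 - α)) := by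
      intro x
      rw [hf]
      rw [Real.mul_rpow (mul_pos (hpY_pos y) (hcp_pos x y)).le
          (Real.rpow_nonneg (hcq_pos x y).le _),
        Real.mul_rpow (hpY_pos y).le (hcp_pos x y).le,
        ← Real.rpow_mul (hcq_pos x y).le, div_mul_cancel₀ _ hαne, mul_assoc]
    simp only [hfe, ← Finset.mul_sum]
    rw [Real.mul_rpow (Real.rpow_nonneg (hpY_pos y).le _)
      (Finset.sum_nonneg fun x _ =>
        (mul_pos (Real.rpow_pos_of_pos (hcp_pos x y) α)
          (Real.rpow_pos_of_pos (hcq_pos x y) (1 - α))).le),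
      ← Real.rpow_mul (hpY_pos y).le, mul_one_div_cancel hαne, Real.rpow_one]
  have hmink' : S ^ (1/α) ≤ T := by
    rw [hT]; exact hmink.trans_eq (Finset.sum_congr rfl fun y _ => hid y)
  -- raise to power α
  have hST : S ≤ T ^ α := by
    have := Real.rpow_le_rpow (Real.rpow_nonneg hSpos.le _) hmink' hα0.le
    rwa [← Real.rpow_mul hSpos.le, one_div, inv_mul_cancel₀ hαne, Real.rpow_one] at this
  have hlog : Real.log S ≤ α * Real.log T := by
    calc Real.log S ≤ Real.log (T ^ α) := Real.log_le_log hSpos hST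
    _ = α * Real.log T := Real.log_rpow hTpos α
  have hc : (0:ℝ) < 1 / (α - 1) := by have := sub_pos.mpr hα; positivity
  calc (1 / (α - 1)) * Real.log S ≤ (1 / (α - 1)) * (α * Real.log T) :=
        mul_le_mul_of_nonneg_left hlog hc.le
    _ = (α / (α - 1)) * Real.log T := by ring
end

section
/- Decomposition of the log-certainty-equivalent with bookmaker's side information: for R ∈ (0,1) ∪ (1,∞), a strictly positive joint PMF p_{XY}, positive fair odds o_{X|Y} (i.e., Σ_x o(x|y)^{−1} = 1 for all y), and a strictly positive betting PMF b_X, one has (1/(1−R)) ln[Σ_{x,y} (b(x) o(x|y))^{1−R} p(x,y)] = D^{n1}_{1/R}(p_{X|Y} || r_{X|Y} | p_Y) − D_R(h_X || b_X), where r(x|y) := o(x|y)^{−1} and h(x) := (Σ_y p(x,y) o(x|y)^{1−R})^{1/R} / Σ_{x'} (Σ_y p(x',y) o(x'|y)^{1−R})^{1/R}. -/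
open Finset

/-- Decomposition of the log isoelastic certainty equivalent for
betting with bookmaker's side information. For risk aversion `R ∈ (0,1) ∪ (1,∞)`,
a strictly positive joint PMF `p_{XY}`, positive fair odds `o_{X|Y}`
(`Σ_x o(x|y)⁻¹ = 1` for all `y`), and a strictly positive betting PMF `b_X`:
`(1/(1−R)) ln[Σ_{x,y} (b(x)o(x|y))^{1−R} p(x,y)]
   = D^{n1}_{1/R}(p_{X|Y}‖r_{X|Y}|p_Y) − D_R(h_X‖b_X)`,
where `p(y) = Σ_x p(x,y)`, `p(x|y) = p(x,y)/p(y)`, `r(x|y) = o(x|y)⁻¹`, and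
`h(x) = (Σ_y p(x,y) o(x|y)^{1−R})^{1/R} / Σ_{x'} (Σ_y p(x',y) o(x'|y)^{1−R})^{1/R}`. -/
theorem bookmaker_side_info_decomposition
    {X Y : Type} [Fintype X] [Fintype Y] [Nonempty X] [Nonempty Y]
    (R : ℝ) (hR0 : 0 < R) (hR1 : R ≠ 1)
    (p : X → Y → ℝ) (o : X → Y → ℝ) (b : X → ℝ)
    (hp_pos : ∀ x y, 0 < p x y) (hp_sum : ∑ x, ∑ y, p x y = 1)
    (ho_pos : ∀ x y, 0 < o x y) (ho_fair : ∀ y, ∑ x, (o x y)⁻¹ = 1)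
    (hb_pos : ∀ x, 0 < b x) (hb_sum : ∑ x, b x = 1) :
    (1 / (1 - R)) * Real.log (∑ x, ∑ y, (b x * o x y) ^ (1 - R) * p x y)
      = (1 / (1 / R - 1)) *
          Real.log (∑ x, (∑ y, (∑ x', p x' y) * (p x y / ∑ x', p x' y) *
            ((o x y)⁻¹) ^ ((1 - 1 / R) / (1 / R))) ^ (1 / R))
        - (1 / (R - 1)) *
          Real.log (∑ x,
            ((∑ y, p x y * (o x y) ^ (1 - R)) ^ (1 / R) /
              ∑ x', (∑ y, p x' y * (o x' y) ^ (1 - R)) ^ (1 / R)) ^ R * (b x) ^ (1 - R)) := by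
  have hR : R ≠ 0 := ne_of_gt hR0
  have hR1' : (1 : ℝ) - R ≠ 0 := sub_ne_zero.mpr (Ne.symm hR1)
  set S : X → ℝ := fun x => ∑ y, p x y * (o x y) ^ (1 - R) with hSdef
  have hSpos : ∀ x, 0 < S x := fun x =>
    Finset.sum_pos (fun y _ => mul_pos (hp_pos x y)
      (Real.rpow_pos_of_pos (ho_pos x y) _)) Finset.univ_nonempty
  set T : ℝ := ∑ x, S x ^ (1 / R) with hTdef
  have hTpos : 0 < T :=
    Finset.sum_pos (fun x _ => Real.rpow_pos_of_pos (hSpos x) _) Finset.univ_nonempty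
  set A : ℝ := ∑ x, S x * (b x) ^ (1 - R) with hAdef
  have hApos : 0 < A :=
    Finset.sum_pos (fun x _ => mul_pos (hSpos x)
      (Real.rpow_pos_of_pos (hb_pos x) _)) Finset.univ_nonempty
  have h1 : (∑ x, ∑ y, (b x * o x y) ^ (1 - R) * p x y) = A := by
    refine Finset.sum_congr rfl fun x _ => ?_
    rw [hSdef]
    simp only
    rw [Finset.sum_mul]
    refine Finset.sum_congr rfl fun y _ => ?_
    rw [Real.mul_rpow (hb_pos x).le (ho_pos x y).le]
    ring
  have h2 : ∀ x, (∑ y, (∑ x', p x' y) * (p x y / ∑ x', p x' y) *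
      ((o x y)⁻¹) ^ ((1 - 1 / R) / (1 / R))) = S x := by
    intro x
    refine Finset.sum_congr rfl fun y _ => ?_
    have hc : (0 : ℝ) < ∑ x', p x' y :=
      Finset.sum_pos (fun x' _ => hp_pos x' y) Finset.univ_nonempty
    have hexp : (1 - 1 / R) / (1 / R) = R - 1 := by field_simp
    have hio : ((o x y)⁻¹) ^ (R - 1) = (o x y) ^ (1 - R) := by
      rw [Real.inv_rpow (ho_pos x y).le, ← Real.rpow_neg (ho_pos x y).le, neg_sub]
    rw [hexp, hio]
    field_simp
  have h3 : (∑ x, (S x ^ (1 / R) / T) ^ R * (b x) ^ (1 - R)) = A / T ^ R := by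
    rw [hAdef, Finset.sum_div]
    refine Finset.sum_congr rfl fun x _ => ?_
    rw [Real.div_rpow (Real.rpow_nonneg (hSpos x).le _) hTpos.le,
      ← Real.rpow_mul (hSpos x).le, one_div_mul_cancel hR, Real.rpow_one]; ring
  simp only [h2]
  rw [h1, ← hTdef, h3, Real.log_div hApos.ne' (Real.rpow_pos_of_pos hTpos R).ne',
    Real.log_rpow hTpos]
  have hR1'' : 1 / R - 1 ≠ 0 := by
    rw [sub_ne_zero]
    intro h
    exact hR1 (by field_simp at h; linarith)
  have hRm1 : R - 1 ≠ 0 := sub_ne_zero.mpr hR1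
  have e1 : 1 / (1 / R - 1) = R / (1 - R) := by
    rw [div_eq_div_iff hR1'' hR1']
    field_simp
  have e2 : 1 / (R - 1) = -(1 / (1 - R)) := by
    rw [div_eq_iff hRm1]
    field_simp
    ring
  rw [e1, e2]
  ring
end

section
/- Optimal bet against a bookmaker with side information: under the assumptions of the decomposition (R ∈ (0,1) ∪ (1,∞), positive fair odds o_{X|Y}, strictly positive p_{XY}), the maximum over betting PMFs b_X of (1/(1−R)) ln[Σ_{x,y} (b(x) o(x|y))^{1−R} p(x,y)] equals D^{n1}_{1/R}(p_{X|Y}||r_{X|Y}|p_Y), attained at b_X = h_X with h(x) = (Σ_y p(x,y) o(x|y)^{1−R})^{1/R} / Σ_{x'} (Σ_y p(x',y) o(x'|y)^{1−R})^{1/R}. -/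
open Finset

lemma holder_lt {X : Type} [Fintype X] (R : ℝ) (hR0 : 0 < R) (hRlt : R < 1)
    (b A : X → ℝ) (hb : ∀ x, 0 < b x) (hbs : ∑ x, b x = 1) (hA : ∀ x, 0 < A x) :
    ∑ x, b x ^ (1 - R) * A x ≤ (∑ x, A x ^ (1/R)) ^ R := by
  have h1R : (0:ℝ) < 1 - R := by linarith
  have hpq : Real.HolderConjugate (1/(1-R)) (1/R) := by
    rw [Real.holderConjugate_iff]; constructor
    · rw [lt_div_iff₀ h1R]; linarith
    · rw [one_div, inv_inv, one_div, inv_inv]; ring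
  have hh := Real.inner_le_Lp_mul_Lq univ (fun x => b x ^ (1-R)) A hpq
  simp only [one_div_one_div] at hh
  calc ∑ x, b x ^ (1 - R) * A x ≤
      (∑ x, |b x ^ (1-R)| ^ (1/(1-R))) ^ (1-R) * (∑ x, |A x| ^ (1/R)) ^ R := hh
    _ = (∑ x, A x ^ (1/R)) ^ R := by
        have h1 : ∀ x : X, |b x ^ (1-R)| ^ (1/(1-R)) = b x := by
          intro x
          rw [abs_of_pos (Real.rpow_pos_of_pos (hb x) _),
            ← Real.rpow_mul (hb x).le, mul_one_div_cancel h1R.ne', Real.rpow_one]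
        have h2 : ∀ x : X, |A x| ^ (1/R) = A x ^ (1/R) := fun x => by
          rw [abs_of_pos (hA x)]
        simp only [h1, h2, hbs, Real.one_rpow, one_mul]

lemma holder_gt {X : Type} [Fintype X] (R : ℝ) (hRgt : 1 < R)
    (b A : X → ℝ) (hb : ∀ x, 0 < b x) (hbs : ∑ x, b x = 1) (hA : ∀ x, 0 < A x) :
    (∑ x, A x ^ (1/R)) ^ R ≤ ∑ x, b x ^ (1 - R) * A x := by
  have hR0 : (0:ℝ) < R := by linarith
  have hR1 : (0:ℝ) < R - 1 := by linarith
  have hpq : Real.HolderConjugate R (R/(R-1)) := by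
    rw [Real.holderConjugate_iff]; constructor
    · exact hRgt
    · field_simp; ring
  have hT : ∀ x : X, 0 < b x ^ (1 - R) * A x :=
    fun x => mul_pos (Real.rpow_pos_of_pos (hb x) _) (hA x)
  have hh := Real.inner_le_Lp_mul_Lq univ
    (fun x => (b x ^ (1-R) * A x) ^ (1/R)) (fun x => b x ^ ((R-1)/R)) hpq
  have hfg : ∀ x : X, (b x ^ (1-R) * A x) ^ (1/R) * b x ^ ((R-1)/R) = A x ^ (1/R) := by
    intro x
    rw [Real.mul_rpow (Real.rpow_pos_of_pos (hb x) _).le (hA x).le,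
      ← Real.rpow_mul (hb x).le]
    rw [mul_assoc, mul_comm (A x ^ (1/R)), ← mul_assoc, ← Real.rpow_add (hb x)]
    have : (1-R) * (1/R) + (R-1)/R = 0 := by field_simp; ring
    rw [this, Real.rpow_zero, one_mul]
  have hf : ∀ x : X, |(b x ^ (1-R) * A x) ^ (1/R)| ^ R = b x ^ (1-R) * A x := by
    intro x
    rw [abs_of_pos (Real.rpow_pos_of_pos (hT x) _), ← Real.rpow_mul (hT x).le,
      one_div_mul_cancel hR0.ne', Real.rpow_one]
  have hg : ∀ x : X, |b x ^ ((R-1)/R)| ^ (R/(R-1)) = b x := by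
    intro x
    rw [abs_of_pos (Real.rpow_pos_of_pos (hb x) _), ← Real.rpow_mul (hb x).le]
    rw [div_mul_div_comm, mul_comm (R-1) R, div_self (by positivity), Real.rpow_one]
  simp only [hfg, hf, hg, hbs] at hh
  have h1q : 1/(R/(R-1)) = (R-1)/R := one_div_div _ _
  rw [h1q, Real.one_rpow, mul_one] at hh
  calc (∑ x, A x ^ (1/R)) ^ R ≤ ((∑ x, b x ^ (1-R) * A x) ^ (1/R)) ^ R := by
        apply Real.rpow_le_rpow (sum_nonneg fun x _ => (Real.rpow_pos_of_pos (hA x) _).le) hh hR0.le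
    _ = ∑ x, b x ^ (1-R) * A x := by
        rw [← Real.rpow_mul (sum_nonneg fun x _ => (hT x).le),
          one_div_mul_cancel hR0.ne', Real.rpow_one]


/-- Optimal bet against a bookmaker with side information.
For `R ∈ (0,1) ∪ (1,∞)`, positive fair odds `o_{X|Y}` and a strictly positive
joint PMF `p_{XY}`, the maximum over betting PMFs `b_X` of the log isoelastic
certainty equivalent `(1/(1−R)) ln[Σ_{x,y} (b(x)o(x|y))^{1−R} p(x,y)]` equals
`D^{n1}_{1/R}(p_{X|Y}‖r_{X|Y}|p_Y)` (with `r(x|y) = o(x|y)⁻¹`), attained at the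
betting strategy `b_X = h_X`, where
`h(x) = (Σ_y p(x,y) o(x|y)^{1−R})^{1/R} / Σ_{x'} (Σ_y p(x',y) o(x'|y)^{1−R})^{1/R}`. -/
theorem bookmaker_side_info_optimal_bet
    {X Y : Type} [Fintype X] [Fintype Y] [Nonempty X] [Nonempty Y]
    (R : ℝ) (hR0 : 0 < R) (hR1 : R ≠ 1)
    (p : X → Y → ℝ) (o : X → Y → ℝ)
    (hp_pos : ∀ x y, 0 < p x y) (hp_sum : ∑ x, ∑ y, p x y = 1)
    (ho_pos : ∀ x y, 0 < o x y) (ho_fair : ∀ y, ∑ x, (o x y)⁻¹ = 1) :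
    IsGreatest
      {w : ℝ | ∃ b : X → ℝ, (∀ x, 0 < b x) ∧ (∑ x, b x = 1) ∧
        w = (1 / (1 - R)) * Real.log (∑ x, ∑ y, (b x * o x y) ^ (1 - R) * p x y)}
      ((1 / (1 / R - 1)) *
        Real.log (∑ x, (∑ y, (∑ x', p x' y) * (p x y / ∑ x', p x' y) *
          ((o x y)⁻¹) ^ ((1 - 1 / R) / (1 / R))) ^ (1 / R)))
    ∧
    (1 / (1 - R)) * Real.log (∑ x, ∑ y,
        (((∑ y', p x y' * (o x y') ^ (1 - R)) ^ (1 / R) /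
          ∑ x', (∑ y', p x' y' * (o x' y') ^ (1 - R)) ^ (1 / R)) * o x y) ^ (1 - R) * p x y)
      = (1 / (1 / R - 1)) *
        Real.log (∑ x, (∑ y, (∑ x', p x' y) * (p x y / ∑ x', p x' y) *
          ((o x y)⁻¹) ^ ((1 - 1 / R) / (1 / R))) ^ (1 / R)) := by
  have h1R : (1:ℝ) - R ≠ 0 := sub_ne_zero.mpr (Ne.symm hR1)
  set A : X → ℝ := fun x => ∑ y, p x y * (o x y) ^ (1 - R) with hAdef
  have hApos : ∀ x, 0 < A x := fun x =>
    sum_pos (fun y _ => mul_pos (hp_pos x y) (Real.rpow_pos_of_pos (ho_pos x y) _))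
      univ_nonempty
  set S : ℝ := ∑ x, (A x) ^ (1/R) with hSdef
  have hSpos : 0 < S :=
    sum_pos (fun x _ => Real.rpow_pos_of_pos (hApos x) _) univ_nonempty
  -- the target sum simplifies to S
  have hTS : (∑ x, (∑ y, (∑ x', p x' y) * (p x y / ∑ x', p x' y) *
          ((o x y)⁻¹) ^ ((1 - 1 / R) / (1 / R))) ^ (1 / R)) = S := by
    refine sum_congr rfl fun x _ => ?_
    congr 1
    refine sum_congr rfl fun y _ => ?_
    have hsum : (0:ℝ) < ∑ x', p x' y := sum_pos (fun x' _ => hp_pos x' y) univ_nonempty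
    have hexp : (1 - 1/R)/(1/R) = R - 1 := by field_simp
    rw [hexp, Real.inv_rpow (ho_pos x y).le, ← Real.rpow_neg (ho_pos x y).le, neg_sub,
      mul_comm (∑ x', p x' y) (p x y / ∑ x', p x' y), div_mul_cancel₀ _ hsum.ne']
  -- coefficient
  have hcoef : 1/(1/R - 1) = R/(1-R) := by
    rw [show 1/R - 1 = (1-R)/R by field_simp, one_div_div]
  -- factorization of the double sum
  have hfact : ∀ b : X → ℝ, (∀ x, 0 < b x) →
      (∑ x, ∑ y, (b x * o x y) ^ (1 - R) * p x y) = ∑ x, (b x) ^ (1-R) * A x := by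
    intro b hb
    refine sum_congr rfl fun x _ => ?_
    rw [hAdef, Finset.mul_sum]
    refine sum_congr rfl fun y _ => ?_
    rw [Real.mul_rpow (hb x).le (ho_pos x y).le]
    ring
  -- the optimal bet
  set h : X → ℝ := fun x => (A x) ^ (1/R) / S with hhdef
  have hhpos : ∀ x, 0 < h x := fun x => div_pos (Real.rpow_pos_of_pos (hApos x) _) hSpos
  have hhsum : ∑ x, h x = 1 := by
    rw [hhdef]
    simp only
    rw [← Finset.sum_div, ← hSdef, div_self hSpos.ne']
  -- value at h
  have hval : ∑ x, (h x) ^ (1-R) * A x = S ^ R := by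
    have hterm : ∀ x : X, (h x) ^ (1-R) * A x = A x ^ (1/R) / S ^ (1-R) := by
      intro x
      rw [hhdef]
      simp only
      rw [Real.div_rpow (Real.rpow_pos_of_pos (hApos x) _).le hSpos.le,
        ← Real.rpow_mul (hApos x).le, div_mul_eq_mul_div, mul_comm]
      congr 1
      rw [mul_comm, ← Real.rpow_add_one (hApos x).ne']
      congr 1
      field_simp
      ring
    rw [Finset.sum_congr rfl fun x _ => hterm x, ← Finset.sum_div, ← hSdef]
    rw [eq_comm, eq_div_iff (Real.rpow_pos_of_pos hSpos _).ne',
      ← Real.rpow_add hSpos]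
    rw [show R + (1 - R) = 1 by ring, Real.rpow_one]
  -- equality part
  have hEq : (1 / (1 - R)) * Real.log (∑ x, ∑ y,
        (((∑ y', p x y' * (o x y') ^ (1 - R)) ^ (1 / R) /
          ∑ x', (∑ y', p x' y' * (o x' y') ^ (1 - R)) ^ (1 / R)) * o x y) ^ (1 - R) * p x y)
      = (1 / (1 / R - 1)) *
        Real.log (∑ x, (∑ y, (∑ x', p x' y) * (p x y / ∑ x', p x' y) *
          ((o x y)⁻¹) ^ ((1 - 1 / R) / (1 / R))) ^ (1 / R)) := by
    rw [hTS, hcoef]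
    have : (∑ x, ∑ y,
        (((∑ y', p x y' * (o x y') ^ (1 - R)) ^ (1 / R) /
          ∑ x', (∑ y', p x' y' * (o x' y') ^ (1 - R)) ^ (1 / R)) * o x y) ^ (1 - R) * p x y)
        = ∑ x, (h x) ^ (1-R) * A x := hfact h hhpos
    rw [this, hval, Real.log_rpow hSpos]
    rw [div_mul_eq_mul_div, div_mul_eq_mul_div, one_mul]
  refine ⟨⟨⟨h, hhpos, hhsum, ?_⟩, ?_⟩, hEq⟩
  · -- membership: the value at h equals the claimed max
    exact hEq.symm
  · -- upper bound
    rintro w ⟨b, hb, hbs, rfl⟩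
    rw [hTS, hcoef, hfact b hb]
    have hTpos : 0 < ∑ x, (b x) ^ (1-R) * A x :=
      sum_pos (fun x _ => mul_pos (Real.rpow_pos_of_pos (hb x) _) (hApos x)) univ_nonempty
    rcases lt_or_gt_of_ne hR1 with hRlt | hRgt
    · have hle : ∑ x, (b x) ^ (1-R) * A x ≤ S ^ R := holder_lt R hR0 hRlt b A hb hbs hApos
      have hlog : Real.log (∑ x, (b x) ^ (1-R) * A x) ≤ R * Real.log S := by
        rw [← Real.log_rpow hSpos]
        exact Real.log_le_log hTpos hle
      calc (1/(1-R)) * Real.log (∑ x, (b x) ^ (1-R) * A x)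
          ≤ (1/(1-R)) * (R * Real.log S) :=
            mul_le_mul_of_nonneg_left hlog (le_of_lt (div_pos one_pos (by linarith)))
        _ = R/(1-R) * Real.log S := by ring
    · have hle : S ^ R ≤ ∑ x, (b x) ^ (1-R) * A x := holder_gt R hRgt b A hb hbs hApos
      have hlog : R * Real.log S ≤ Real.log (∑ x, (b x) ^ (1-R) * A x) := by
        rw [← Real.log_rpow hSpos]
        exact Real.log_le_log (Real.rpow_pos_of_pos hSpos _) hle
      have hneg : 1/(1-R) ≤ 0 := by
        apply div_nonpos_of_nonneg_of_nonpos zero_le_one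
        linarith
      calc (1/(1-R)) * Real.log (∑ x, (b x) ^ (1-R) * A x)
          ≤ (1/(1-R)) * (R * Real.log S) := mul_le_mul_of_nonpos_left hlog hneg
        _ = R/(1-R) * Real.log S := by ring
end

section
/- Side information directly given to the gambler is at least as valuable as side information given only to the bookmaker: for R ∈ [1, ∞) (equivalently order α = 1/R ∈ (0,1]), conditional PMFs p_{X|G}, r_{X|G} with positive entries and PMF p_G, D^{BLP}_{1/R}(p_{X|G}||r_{X|G}|p_G) ≥ D^{n1}_{1/R}(p_{X|G}||r_{X|G}|p_G). -/
open Finset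

/-- Side information given directly to the gambler is at least as
valuable as side information given only to the bookmaker: for risk aversion
`R ∈ [1,∞)` (i.e. order `α = 1/R ∈ (0,1]`), conditional PMFs `p_{X|G}`, `r_{X|G}`
with positive entries and a PMF `p_G`,
`D^{BLP}_{1/R}(p_{X|G}‖r_{X|G}|p_G) ≥ D^{n1}_{1/R}(p_{X|G}‖r_{X|G}|p_G)`. -/
theorem BLP_ge_n1
    {X G : Type} [Fintype X] [Fintype G] [Nonempty X] [Nonempty G]
    (R : ℝ) (hR : 1 ≤ R)
    (cp cr : X → G → ℝ) (pG : G → ℝ)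
    (hcp_pos : ∀ x g, 0 < cp x g) (hcp_sum : ∀ g, ∑ x, cp x g = 1)
    (hcr_pos : ∀ x g, 0 < cr x g) (hcr_sum : ∀ g, ∑ x, cr x g = 1)
    (hpG_pos : ∀ g, 0 < pG g) (hpG_sum : ∑ g, pG g = 1) :
    (1 / (1 / R - 1)) *
        Real.log (∑ x, (∑ g, pG g * cp x g *
          (cr x g) ^ ((1 - 1 / R) / (1 / R))) ^ (1 / R))
      ≤ ((1 / R) / (1 / R - 1)) *
        Real.log (∑ g, pG g *
          (∑ x, (cp x g) ^ (1 / R) * (cr x g) ^ (1 - 1 / R)) ^ (1 / (1 / R))) := by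
  rcases hR.eq_or_lt with h1 | hR1
  · subst h1; norm_num
  · have hR0 : (0:ℝ) < R := lt_trans one_pos hR1
    set α : ℝ := 1 / R with hαdef
    have hα0 : 0 < α := by positivity
    have hα1 : α < 1 := by rw [hαdef, div_lt_one hR0]; exact hR1
    clear_value α
    clear hαdef
    -- Definitions
    have hT_pos : ∀ g, 0 < ∑ x, (cp x g) ^ α * (cr x g) ^ (1 - α) := by
      intro g
      exact Finset.sum_pos (fun x _ => by
        have := hcp_pos x g; have := hcr_pos x g; positivity) univ_nonempty
    set T : G → ℝ := fun g => ∑ x, (cp x g) ^ α * (cr x g) ^ (1 - α) with hTdef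
    set S : ℝ := ∑ g, pG g * (T g) ^ (1 / α) with hSdef
    have hS_pos : 0 < S := Finset.sum_pos (fun g _ => by
      have := hpG_pos g; have := hT_pos g; positivity) univ_nonempty
    set u : X → G → ℝ := fun x g => cp x g * (cr x g) ^ ((1 - α) / α) with hudef
    have hu_pos : ∀ x g, 0 < u x g := fun x g => by
      have := hcp_pos x g; have := hcr_pos x g; positivity
    have huα : ∀ x g, (u x g) ^ α = (cp x g) ^ α * (cr x g) ^ (1 - α) := by
      intro x g
      rw [hudef]
      rw [Real.mul_rpow (hcp_pos x g).le (Real.rpow_nonneg (hcr_pos x g).le _),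
        ← Real.rpow_mul (hcr_pos x g).le, div_mul_cancel₀ _ hα0.ne']
    set N : ℝ := ∑ x, (∑ g, pG g * u x g) ^ α with hNdef
    have hTα : ∀ g, (T g) = ∑ x, (u x g) ^ α := by
      intro g; rw [hTdef]; exact (Finset.sum_congr rfl fun x _ => (huα x g).symm)
    -- key inequality : S ^ α ≤ N
    have key : S ^ α ≤ N := by
      have hp1 : (1:ℝ) ≤ 1 / α := by
        rw [le_div_iff₀ hα0]; linarith
      -- weights
      have hwsum : ∑ g, (pG g * (T g) ^ (1/α)) / S = 1 := by
        rw [← Finset.sum_div, ← hSdef, div_self hS_pos.ne']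
      have hstep : ∀ x : X,
          ∑ g, ((pG g * (T g) ^ (1/α)) / S) * ((u x g / (T g) ^ (1/α)) ^ α)
            ≤ ((∑ g, pG g * u x g) / S) ^ α := by
        intro x
        have := Real.arith_mean_le_rpow_mean (univ : Finset G)
          (fun g => (pG g * (T g) ^ (1/α)) / S)
          (fun g => (u x g / (T g) ^ (1/α)) ^ α)
          (fun g _ => by
            have := hpG_pos g; have := hT_pos g; positivity)
          hwsum
          (fun g _ => by
            have := hu_pos x g; have := hT_pos g; positivity)
          hp1
        have hz : ∀ g : G, ((u x g / (T g) ^ (1/α)) ^ α) ^ ((1:ℝ)/α) = u x g / (T g) ^ (1/α) := by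
          intro g
          rw [← Real.rpow_mul (by have := hu_pos x g; have := hT_pos g; positivity),
            mul_one_div, div_self hα0.ne', Real.rpow_one]
        rw [one_div_one_div] at this
        simp only [hz] at this
        refine this.trans (le_of_eq ?_)
        congr 1
        rw [Finset.sum_div]
        refine Finset.sum_congr rfl fun g _ => ?_
        have hTne : (T g) ^ (1/α) ≠ 0 := by have := hT_pos g; positivity
        field_simp
      have hsum1 :
          ∑ x, ∑ g, ((pG g * (T g) ^ (1/α)) / S) * ((u x g / (T g) ^ (1/α)) ^ α) = 1 := by
        rw [Finset.sum_comm]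
        have heach : ∀ g : G, ∑ x, ((pG g * (T g) ^ (1/α)) / S) * ((u x g / (T g) ^ (1/α)) ^ α)
            = (pG g * (T g) ^ (1/α)) / S := by
          intro g
          rw [← Finset.mul_sum]
          have hTne : (0:ℝ) < (T g) ^ (1/α) := by have := hT_pos g; positivity
          have hxe : ∀ x : X, (u x g / (T g) ^ (1/α)) ^ α = (u x g) ^ α / T g := by
            intro x
            rw [Real.div_rpow (hu_pos x g).le hTne.le,
              ← Real.rpow_mul (hT_pos g).le, one_div_mul_cancel hα0.ne', Real.rpow_one]
          have hone : ∑ x, (u x g / (T g) ^ (1/α)) ^ α = 1 := by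
            rw [Finset.sum_congr rfl fun x _ => hxe x, ← Finset.sum_div, ← hTα,
              div_self (hT_pos g).ne']
          rw [hone, mul_one]
        rw [Finset.sum_congr rfl fun g _ => heach g]
        exact hwsum
      have h1N : 1 ≤ ∑ x, ((∑ g, pG g * u x g) / S) ^ α := by
        rw [← hsum1]
        exact Finset.sum_le_sum fun x _ => hstep x
      have hdiv : ∀ x : X, ((∑ g, pG g * u x g) / S) ^ α
          = (∑ g, pG g * u x g) ^ α / S ^ α := by
        intro x
        exact Real.div_rpow (Finset.sum_nonneg fun g _ => by
          have := hpG_pos g; have := hu_pos x g; positivity) hS_pos.le α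
      rw [Finset.sum_congr rfl fun x _ => hdiv x, ← Finset.sum_div, ← hNdef] at h1N
      have hSα : (0:ℝ) < S ^ α := by positivity
      rw [le_div_iff₀ hSα, one_mul] at h1N
      exact h1N
    -- from key to logs
    have hN_pos : 0 < N := lt_of_lt_of_le (by positivity) key
    have hlog : α * Real.log S ≤ Real.log N := by
      rw [← Real.log_rpow hS_pos]
      exact Real.log_le_log (by positivity) key
    have hc : 1 / (α - 1) ≤ 0 := by
      apply div_nonpos_of_nonneg_of_nonpos one_pos.le
      linarith
    have hNform : (∑ x, (∑ g, pG g * cp x g *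
          (cr x g) ^ ((1 - α) / α)) ^ α) = N := by
      rw [hNdef]
      refine Finset.sum_congr rfl fun x _ => ?_
      congr 1
      exact Finset.sum_congr rfl fun g _ => by rw [hudef]; ring
    rw [hNform]
    calc (1 / (α - 1)) * Real.log N ≤ (1 / (α - 1)) * (α * Real.log S) :=
          mul_le_mul_of_nonpos_left hlog hc
      _ = (α / (α - 1)) * Real.log S := by ring
end

section
/- Operational formula for the Rényi probability: for any strictly positive PMF p_X, order q ∈ (0,1) ∪ (1,∞), and constant C > 0, the maximum over betting PMFs b_X of the isoelastic certainty equivalent with risk aversion 1/q and constant odds C, namely max_{b_X} (Σ_x (b(x)·C)^{1−1/q} p(x))^{1/(1−1/q)}, equals C · p_q(X), where p_q(X) = (Σ_x p(x)^q)^{1/(q−1)}. -/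
open Finset

lemma escort_value {X : Type} [Fintype X] [Nonempty X]
    (q : ℝ) (hq0 : 0 < q) (hq1 : q ≠ 1) (C : ℝ) (hC : 0 < C)
    (p : X → ℝ) (hp_pos : ∀ x, 0 < p x) :
    (∑ x, ((p x ^ q / (∑ y, p y ^ q)) * C) ^ (1 - 1 / q) * p x) ^ (1 / (1 - 1 / q))
      = C * (∑ x, (p x) ^ q) ^ (1 / (q - 1)) := by
  have hq : q ≠ 0 := ne_of_gt hq0
  have hq1' : q - 1 ≠ 0 := sub_ne_zero.mpr hq1
  set S := ∑ y, p y ^ q with hS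
  have hSpos : 0 < S := Finset.sum_pos (fun y _ => Real.rpow_pos_of_pos (hp_pos y) q)
    Finset.univ_nonempty
  set α := 1 - 1 / q with hα
  have hα0 : α ≠ 0 := by
    rw [hα]; intro h; apply hq1; field_simp at h; linarith
  have hqα : q * α = q - 1 := by rw [hα, mul_sub, mul_one, mul_one_div_cancel hq]
  have hterm : ∀ x : X, ((p x ^ q / S) * C) ^ α * p x = (C / S) ^ α * p x ^ q := by
    intro x
    have h1 : (p x ^ q / S) * C = p x ^ q * (C / S) := by ring
    rw [h1, Real.mul_rpow (Real.rpow_nonneg (hp_pos x).le q) (by positivity),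
      ← Real.rpow_mul (hp_pos x).le, hqα, Real.rpow_sub (hp_pos x), Real.rpow_one]
    field_simp [(hp_pos x).ne']
  have hsum : ∑ x, ((p x ^ q / S) * C) ^ α * p x = (C / S) ^ α * S := by
    simp_rw [hterm]; rw [← Finset.mul_sum]
  rw [hsum]
  have h2 : ((C / S) ^ α * S) ^ (1 / α) = (C / S) * S ^ (1 / α) := by
    rw [Real.mul_rpow (by positivity) hSpos.le, ← Real.rpow_mul (by positivity),
      mul_one_div_cancel hα0, Real.rpow_one]
  rw [h2]
  have h3 : S ^ (1 / α) = S * S ^ (1 / (q - 1)) := by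
    rw [← Real.rpow_one_add' hSpos.le]
    · congr 1
      rw [hα]; field_simp; ring
    · intro h
      apply hq
      field_simp at h
      linarith
  rw [h3]
  field_simp

lemma bet_upper {X : Type} [Fintype X] [Nonempty X]
    (q : ℝ) (hq0 : 0 < q) (hq1 : q ≠ 1) (C : ℝ) (hC : 0 < C)
    (p : X → ℝ) (hp_pos : ∀ x, 0 < p x)
    (b : X → ℝ) (hb_pos : ∀ x, 0 < b x) (hb_sum : ∑ x, b x = 1) :
    (∑ x, (b x * C) ^ (1 - 1 / q) * p x) ^ (1 / (1 - 1 / q))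
      ≤ C * (∑ x, (p x) ^ q) ^ (1 / (q - 1)) := by
  have hq : q ≠ 0 := ne_of_gt hq0
  have hq1' : q - 1 ≠ 0 := sub_ne_zero.mpr hq1
  set S := ∑ y, p y ^ q with hS
  have hSpos : 0 < S := Finset.sum_pos (fun y _ => Real.rpow_pos_of_pos (hp_pos y) q)
    Finset.univ_nonempty
  set α := 1 - 1 / q with hα
  have hα0 : α ≠ 0 := by
    rw [hα]; intro h; apply hq1; field_simp at h; linarith
  have hqα : q * α = q - 1 := by rw [hα, mul_sub, mul_one, mul_one_div_cancel hq]
  set T := ∑ x, b x ^ α * p x with hT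
  have hTpos : 0 < T := Finset.sum_pos
    (fun x _ => mul_pos (Real.rpow_pos_of_pos (hb_pos x) α) (hp_pos x)) Finset.univ_nonempty
  have hsum : ∑ x, (b x * C) ^ α * p x = C ^ α * T := by
    rw [hT, Finset.mul_sum]
    refine Finset.sum_congr rfl fun x _ => ?_
    rw [Real.mul_rpow (hb_pos x).le hC.le]
    ring
  rw [hsum]
  have h2 : (C ^ α * T) ^ (1 / α) = C * T ^ (1 / α) := by
    rw [Real.mul_rpow (by positivity) hTpos.le, ← Real.rpow_mul hC.le,
      mul_one_div_cancel hα0, Real.rpow_one]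
  rw [h2]
  have key : T ^ (1 / α) ≤ S ^ (1 / (q - 1)) := by
    rcases lt_or_gt_of_ne hq1 with hlt | hgt
    · -- q < 1, α < 0
      have hαneg : α < 0 := by
        rw [hα]; simp only [sub_neg]; rw [lt_div_iff₀ hq0]; linarith
      have hpq : (1 / q).HolderConjugate (1 / (1 - q)) :=
        Real.holderConjugate_one_div hq0 (by linarith) (by ring)
      have hH := Real.inner_le_Lp_mul_Lq_of_nonneg (s := Finset.univ)
        (f := fun x => (b x ^ α * p x) ^ q) (g := fun x => b x ^ (1 - q)) hpq
        (fun x _ => Real.rpow_nonneg (mul_pos (Real.rpow_pos_of_pos (hb_pos x) α) (hp_pos x)).le q)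
        (fun x _ => Real.rpow_nonneg (hb_pos x).le _)
      have e1 : ∀ x : X, (b x ^ α * p x) ^ q * b x ^ (1 - q) = p x ^ q := by
        intro x
        rw [Real.mul_rpow (Real.rpow_nonneg (hb_pos x).le α) (hp_pos x).le,
          ← Real.rpow_mul (hb_pos x).le, mul_comm α q, hqα,
          mul_right_comm, ← Real.rpow_add (hb_pos x)]
        norm_num
      have e2 : ∀ x : X, ((b x ^ α * p x) ^ q) ^ (1 / q) = b x ^ α * p x := by
        intro x
        rw [← Real.rpow_mul (mul_nonneg (Real.rpow_nonneg (hb_pos x).le α) (hp_pos x).le),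
          mul_one_div_cancel hq, Real.rpow_one]
      have e3 : ∀ x : X, (b x ^ (1 - q)) ^ (1 / (1 - q)) = b x := by
        intro x
        rw [← Real.rpow_mul (hb_pos x).le, mul_one_div_cancel (by linarith : (1:ℝ) - q ≠ 0),
          Real.rpow_one]
      simp only [e1, e2, e3, one_div_one_div] at hH
      rw [hb_sum, ← hT, ← hS, Real.one_rpow, mul_one] at hH
      -- hH : S ≤ T ^ q
      have h4 : S ^ (1 / q) ≤ T := by
        calc S ^ (1 / q) ≤ (T ^ q) ^ (1 / q) :=
              Real.rpow_le_rpow hSpos.le hH (by positivity)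
          _ = T := by rw [← Real.rpow_mul hTpos.le, mul_one_div_cancel hq, Real.rpow_one]
      calc T ^ (1 / α) ≤ (S ^ (1 / q)) ^ (1 / α) :=
            Real.rpow_le_rpow_of_nonpos (Real.rpow_pos_of_pos hSpos _) h4
              (one_div_nonpos.mpr hαneg.le)
        _ = S ^ (1 / (q - 1)) := by
            rw [← Real.rpow_mul hSpos.le, div_mul_div_comm, one_mul, hqα]
    · -- 1 < q, α > 0
      have hαpos : 0 < α := by
        rw [hα]; simp only [sub_pos]; rw [div_lt_iff₀ hq0]; linarith
      have hαlt1 : α < 1 := by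
        rw [hα]; simp only [sub_lt_self_iff]; positivity
      have hpq : (1 / α).HolderConjugate q := by
        rw [Real.holderConjugate_iff]
        constructor
        · exact (one_lt_one_div hαpos hαlt1)
        · rw [one_div, inv_inv, hα, inv_eq_one_div]; ring
      have hH := Real.inner_le_Lp_mul_Lq_of_nonneg (s := Finset.univ)
        (f := fun x => b x ^ α) (g := p) hpq
        (fun x _ => Real.rpow_nonneg (hb_pos x).le α)
        (fun x _ => (hp_pos x).le)
      have e1 : ∀ x : X, (b x ^ α) ^ (1 / α) = b x := by
        intro x
        rw [← Real.rpow_mul (hb_pos x).le, mul_one_div_cancel hα0, Real.rpow_one]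
      simp only [e1, one_div_one_div] at hH
      rw [hb_sum, ← hT, ← hS, Real.one_rpow, one_mul] at hH
      -- hH : T ≤ S ^ (1/q)
      calc T ^ (1 / α) ≤ (S ^ (1 / q)) ^ (1 / α) :=
            Real.rpow_le_rpow hTpos.le hH (by positivity)
        _ = S ^ (1 / (q - 1)) := by
            rw [← Real.rpow_mul hSpos.le, div_mul_div_comm, one_mul, hqα]
  calc C * T ^ (1 / α) ≤ C * S ^ (1 / (q - 1)) := by
        exact mul_le_mul_of_nonneg_left key hC.le

/-- Operational formula for the Rényi probability: for any strictly
positive PMF `p_X`, order `q ∈ (0,1) ∪ (1,∞)`, and constant `C > 0`, the maximum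
over betting PMFs `b_X` of the isoelastic certainty equivalent with risk aversion
`1/q` and constant odds `C`, namely
`max_{b_X} (Σ_x (b(x)·C)^{1−1/q} p(x))^{1/(1−1/q)}`, equals `C · p_q(X)`, where
`p_q(X) = (Σ_x p(x)^q)^{1/(q−1)}`. -/
theorem renyi_probability_operational
    {X : Type} [Fintype X] [Nonempty X]
    (q : ℝ) (hq0 : 0 < q) (hq1 : q ≠ 1) (C : ℝ) (hC : 0 < C)
    (p : X → ℝ) (hp_pos : ∀ x, 0 < p x) (hp_sum : ∑ x, p x = 1) :
    IsGreatest
      {w : ℝ | ∃ b : X → ℝ, (∀ x, 0 < b x) ∧ (∑ x, b x = 1) ∧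
        w = (∑ x, (b x * C) ^ (1 - 1 / q) * p x) ^ (1 / (1 - 1 / q))}
      (C * (∑ x, (p x) ^ q) ^ (1 / (q - 1))) := by
  have hSpos : 0 < ∑ y, p y ^ q := Finset.sum_pos
    (fun y _ => Real.rpow_pos_of_pos (hp_pos y) q) Finset.univ_nonempty
  constructor
  · refine ⟨fun x => p x ^ q / (∑ y, p y ^ q), fun x => div_pos (Real.rpow_pos_of_pos (hp_pos x) q) hSpos, ?_, ?_⟩
    · rw [← Finset.sum_div, div_self hSpos.ne']
    · exact (escort_value q hq0 hq1 C hC p hp_pos).symm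
  · rintro w ⟨b, hb_pos, hb_sum, rfl⟩
    exact bet_upper q hq0 hq1 C hC p hp_pos b hb_pos hb_sum
end

section
/- Operational formula for the Arimoto–Rényi conditional quantity: for any strictly positive joint PMF p_{XG}, order q ∈ (0,1) ∪ (1,∞), and constant C > 0, max over conditional betting PMFs b_{X|G} of (Σ_{x,g} (b(x|g)·C)^{1−1/q} p(x,g))^{1/(1−1/q)} equals C · p_q(X|G), where p_q(X|G) = (Σ_g (Σ_x p(x,g)^q)^{1/q})^{q/(q−1)}. -/
open Finset

private lemma holder_bet_gt {X : Type} [Fintype X] {q : ℝ} (hq : 1 < q)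
    {b p : X → ℝ} (hb : ∀ x, 0 < b x) (hbs : ∑ x, b x = 1) (hp : ∀ x, 0 < p x) :
    ∑ x, b x ^ (1 - 1 / q) * p x ≤ (∑ x, p x ^ q) ^ (1 / q) := by
  have hq0 : (0:ℝ) < q := one_pos.trans hq
  have hq1 : q - 1 ≠ 0 := sub_ne_zero.mpr hq.ne'
  have hconj : Real.HolderConjugate (q / (q - 1)) q := by
    rw [Real.holderConjugate_iff]; constructor
    · rw [lt_div_iff₀ (by linarith)]; linarith
    · field_simp; ring
  have h := Real.inner_le_Lp_mul_Lq_of_nonneg (s := univ) hconj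
      (f := fun x => b x ^ (1 - 1 / q)) (g := p)
      (fun x _ => (Real.rpow_pos_of_pos (hb x) _).le) (fun x _ => (hp x).le)
  have key : ∀ x : X, (b x ^ (1 - 1/q)) ^ (q/(q-1)) = b x := by
    intro x
    rw [← Real.rpow_mul (hb x).le,
      show (1 - 1/q) * (q/(q-1)) = 1 by field_simp, Real.rpow_one]
  simp only [key] at h
  rwa [hbs, Real.one_rpow, one_mul] at h

private lemma holder_bet_lt {X : Type} [Fintype X] [Nonempty X] {q : ℝ}
    (hq0 : 0 < q) (hq : q < 1)
    {b p : X → ℝ} (hb : ∀ x, 0 < b x) (hbs : ∑ x, b x = 1) (hp : ∀ x, 0 < p x) :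
    (∑ x, p x ^ q) ^ (1 / q) ≤ ∑ x, b x ^ (1 - 1 / q) * p x := by
  have h1q : (0:ℝ) < 1 - q := by linarith
  have hconj : Real.HolderConjugate (1/q) (1/(1-q)) := by
    rw [Real.holderConjugate_iff]; constructor
    · exact one_lt_one_div hq0 hq
    · rw [one_div, one_div, inv_inv, inv_inv]; ring
  have h := Real.inner_le_Lp_mul_Lq_of_nonneg (s := univ) hconj
      (f := fun x => (b x ^ (1 - 1/q) * p x) ^ q) (g := fun x => b x ^ (1 - q))
      (fun x _ => (Real.rpow_nonneg (mul_pos (Real.rpow_pos_of_pos (hb x) _) (hp x)).le _))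
      (fun x _ => (Real.rpow_pos_of_pos (hb x) _).le)
  have hfg : ∀ x : X, ((b x ^ (1 - 1/q) * p x) ^ q) * (b x ^ (1 - q)) = p x ^ q := by
    intro x
    rw [Real.mul_rpow (Real.rpow_pos_of_pos (hb x) _).le (hp x).le,
        ← Real.rpow_mul (hb x).le, mul_assoc, mul_comm (p x ^ q), ← mul_assoc,
        ← Real.rpow_add (hb x),
        show (1 - 1/q) * q + (1 - q) = 0 by field_simp; ring, Real.rpow_zero, one_mul]
  have hf : ∀ x : X, ((b x ^ (1 - 1/q) * p x) ^ q) ^ (1/q) = b x ^ (1 - 1/q) * p x := by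
    intro x
    rw [← Real.rpow_mul (mul_pos (Real.rpow_pos_of_pos (hb x) _) (hp x)).le,
        mul_one_div_cancel hq0.ne', Real.rpow_one]
  have hg : ∀ x : X, (b x ^ (1 - q)) ^ (1/(1-q)) = b x := by
    intro x
    rw [← Real.rpow_mul (hb x).le, mul_one_div_cancel h1q.ne', Real.rpow_one]
  simp only [hfg, hf, hg, one_div_one_div] at h
  rw [hbs, Real.one_rpow, mul_one] at h
  have hD : 0 < ∑ x, b x ^ (1 - 1/q) * p x :=
    sum_pos (fun x _ => mul_pos (Real.rpow_pos_of_pos (hb x) _) (hp x)) univ_nonempty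
  calc (∑ x, p x ^ q) ^ (1/q)
      ≤ ((∑ x, b x ^ (1 - 1/q) * p x) ^ q) ^ (1/q) :=
        Real.rpow_le_rpow (sum_nonneg fun x _ => (Real.rpow_pos_of_pos (hp x) q).le) h
          (by positivity)
    _ = ∑ x, b x ^ (1 - 1/q) * p x := by
        rw [← Real.rpow_mul hD.le, mul_one_div_cancel hq0.ne', Real.rpow_one]

private lemma factor_C {X G : Type} [Fintype X] [Fintype G]
    {q C : ℝ} (hq0 : 0 < q) (hq1 : q ≠ 1) (hC : 0 < C)
    {b p : X → G → ℝ} (hb : ∀ x g, 0 < b x g) (hp : ∀ x g, 0 < p x g) :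
    (∑ x, ∑ g, (b x g * C) ^ (1 - 1/q) * p x g) ^ (1/(1-1/q))
      = C * (∑ g, ∑ x, b x g ^ (1 - 1/q) * p x g) ^ (1/(1-1/q)) := by
  have hr : (1:ℝ) - 1/q ≠ 0 := by
    intro h
    apply hq1
    field_simp at h
    linarith
  have h1 : ∑ x, ∑ g, (b x g * C) ^ (1 - 1/q) * p x g
      = C ^ (1 - 1/q) * ∑ g, ∑ x, b x g ^ (1 - 1/q) * p x g := by
    rw [Finset.sum_comm, Finset.mul_sum]
    refine sum_congr rfl fun g _ => ?_
    rw [Finset.mul_sum]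
    refine sum_congr rfl fun x _ => ?_
    rw [Real.mul_rpow (hb x g).le hC.le]; ring
  rw [h1, Real.mul_rpow (Real.rpow_nonneg hC.le _)
      (sum_nonneg fun g _ => sum_nonneg fun x _ =>
        (mul_pos (Real.rpow_pos_of_pos (hb x g) _) (hp x g)).le),
      ← Real.rpow_mul hC.le, mul_one_div_cancel hr, Real.rpow_one]

private lemma opt_value {X : Type} [Fintype X] [Nonempty X] {q : ℝ}
    (hq0 : 0 < q) {p : X → ℝ} (hp : ∀ x, 0 < p x) :
    ∑ x, (p x ^ q / (∑ y, p y ^ q)) ^ (1 - 1/q) * p x = (∑ y, p y ^ q) ^ (1/q) := by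
  have hT : 0 < ∑ y, p y ^ q :=
    sum_pos (fun y _ => Real.rpow_pos_of_pos (hp y) q) univ_nonempty
  have hterm : ∀ x : X, (p x ^ q / (∑ y, p y ^ q)) ^ (1 - 1/q) * p x
      = p x ^ q / (∑ y, p y ^ q) ^ (1 - 1/q) := by
    intro x
    rw [Real.div_rpow (Real.rpow_pos_of_pos (hp x) q).le hT.le,
        ← Real.rpow_mul (hp x).le, div_mul_eq_mul_div,
        show q * (1 - 1/q) = q - 1 by field_simp]
    congr 1
    rw [← Real.rpow_add_one (hp x).ne', sub_add_cancel]
  simp only [hterm]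
  rw [← sum_div, div_eq_iff (Real.rpow_pos_of_pos hT _).ne', ← Real.rpow_add hT,
      show (1:ℝ)/q + (1 - 1/q) = 1 by ring, Real.rpow_one]

/-- Operational formula for the Arimoto–Rényi conditional quantity:
for any strictly positive joint PMF `p_{XG}`, order `q ∈ (0,1) ∪ (1,∞)` and
constant `C > 0`, the maximum over conditional betting PMFs `b_{X|G}` of
`(Σ_{x,g} (b(x|g)·C)^{1−1/q} p(x,g))^{1/(1−1/q)}` equals `C · p_q(X|G)`, where
`p_q(X|G) = (Σ_g (Σ_x p(x,g)^q)^{1/q})^{q/(q−1)}`. -/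
theorem arimoto_renyi_operational
    {X G : Type} [Fintype X] [Fintype G] [Nonempty X] [Nonempty G]
    (q : ℝ) (hq0 : 0 < q) (hq1 : q ≠ 1) (C : ℝ) (hC : 0 < C)
    (p : X → G → ℝ) (hp_pos : ∀ x g, 0 < p x g) (hp_sum : ∑ x, ∑ g, p x g = 1) :
    IsGreatest
      {w : ℝ | ∃ b : X → G → ℝ, (∀ x g, 0 < b x g) ∧ (∀ g, ∑ x, b x g = 1) ∧
        w = (∑ x, ∑ g, (b x g * C) ^ (1 - 1 / q) * p x g) ^ (1 / (1 - 1 / q))}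
      (C * (∑ g, (∑ x, (p x g) ^ q) ^ (1 / q)) ^ (q / (q - 1))) := by
  have hqne : q - 1 ≠ 0 := sub_ne_zero.mpr hq1
  have hrne : (1:ℝ) - 1/q ≠ 0 := by
    intro h; apply hq1; field_simp at h; linarith
  have hexp : q / (q - 1) = 1 / (1 - 1/q) := by
    field_simp
  have hT : ∀ g : G, 0 < ∑ x, p x g ^ q := fun g =>
    sum_pos (fun x _ => Real.rpow_pos_of_pos (hp_pos x g) q) univ_nonempty
  have hS : 0 < ∑ g, (∑ x, p x g ^ q) ^ (1/q) :=
    sum_pos (fun g _ => Real.rpow_pos_of_pos (hT g) _) univ_nonempty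
  constructor
  · refine ⟨fun x g => p x g ^ q / (∑ y, p y g ^ q),
      fun x g => div_pos (Real.rpow_pos_of_pos (hp_pos x g) q) (hT g),
      fun g => by rw [← sum_div, div_self (hT g).ne'], ?_⟩
    rw [factor_C hq0 hq1 hC
        (fun x g => div_pos (Real.rpow_pos_of_pos (hp_pos x g) q) (hT g)) hp_pos]
    have : ∀ g : G, ∑ x, (p x g ^ q / (∑ y, p y g ^ q)) ^ (1 - 1/q) * p x g
        = (∑ x, p x g ^ q) ^ (1/q) := fun g => opt_value hq0 (fun x => hp_pos x g)
    rw [Finset.sum_congr rfl fun g _ => this g, hexp]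
  · rintro w ⟨b, hb, hbs, rfl⟩
    rw [factor_C hq0 hq1 hC hb hp_pos, hexp]
    have hD : ∀ g : G, 0 < ∑ x, b x g ^ (1 - 1/q) * p x g := fun g =>
      sum_pos (fun x _ => mul_pos (Real.rpow_pos_of_pos (hb x g) _) (hp_pos x g))
        univ_nonempty
    rcases lt_or_gt_of_ne hq1 with hlt | hgt
    · -- q < 1 : r < 0, reverse inequality then antitone rpow
      have hsum : (∑ g, (∑ x, p x g ^ q) ^ (1/q))
          ≤ ∑ g, ∑ x, b x g ^ (1 - 1/q) * p x g :=
        sum_le_sum fun g _ =>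
          holder_bet_lt hq0 hlt (fun x => hb x g) (hbs g) (fun x => hp_pos x g)
      have hrneg : 1 / (1 - 1/q) ≤ 0 := by
        apply le_of_lt
        apply one_div_neg.mpr
        have : 1 < 1/q := one_lt_one_div hq0 hlt
        linarith
      exact mul_le_mul_of_nonneg_left
        (Real.rpow_le_rpow_of_nonpos hS hsum hrneg) hC.le
    · -- 1 < q : r > 0
      have hsum : (∑ g, ∑ x, b x g ^ (1 - 1/q) * p x g)
          ≤ ∑ g, (∑ x, p x g ^ q) ^ (1/q) :=
        sum_le_sum fun g _ =>
          holder_bet_gt hgt (fun x => hb x g) (hbs g) (fun x => hp_pos x g)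
      have hrpos : 0 ≤ 1 / (1 - 1/q) := by
        apply le_of_lt
        apply one_div_pos.mpr
        have h1 : 1/q < 1 := by
          rw [div_lt_one hq0]; linarith
        linarith
      exact mul_le_mul_of_nonneg_left
        (Real.rpow_le_rpow (sum_nonneg fun g _ => (hD g).le) hsum hrpos) hC.le
end
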